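/- Let 0 → A → B → C → 0 be a short exact sequence of R-modules. If B is u-S-semisimple, then A and C are u-S-semisimple. -/

import Mathlib

universe u

/-- `M` is `u`-`S`-semisimple: every short exact sequence with middle term `M` is
`u`-`S`-split. -/
def IsUSSemisimple {R : Type u} [CommRing R] (S : Submonoid R)
    (M : Type u) [AddCommGroup M] [Module R M] : Prop :=
  ∀ (L N : Type u) [AddCommGroup L] [Module R L] [AddCommGroup N] [Module R N]
    (f : L →ₗ[R] M) (g : M →ₗ[R] N),
    Function.Injective f → Function.Surjective g →
    LinearMap.range f = LinearMap.ker g →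
    ∃ s ∈ S, ∃ f' : M →ₗ[R] L, ∀ a : L, f' (f a) = s • a

/-- in a short exact sequence `0 → A → B → C → 0`, if `B` is
`u`-`S`-semisimple then so are `A` and `C`. -/
theorem uS_semisimple_of_sub_and_quotient
    {R : Type u} [CommRing R] (S : Submonoid R)
    {A B C : Type u} [AddCommGroup A] [Module R A] [AddCommGroup B] [Module R B]
    [AddCommGroup C] [Module R C]
    (f : A →ₗ[R] B) (g : B →ₗ[R] C)
    (hf : Function.Injective f) (hg : Function.Surjective g)
    (hfg : LinearMap.range f = LinearMap.ker g)
    (hB : IsUSSemisimple S B) :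
    IsUSSemisimple S A ∧ IsUSSemisimple S C := by
  constructor
  · -- A is u-S-semisimple
    intro L N _ _ _ _ h k hh hk hhk
    -- consider 0 → L → B → B/(range (f∘h)) → 0
    set P := LinearMap.range (f ∘ₗ h) with hP
    have hinj : Function.Injective (f ∘ₗ h) := by
      rw [LinearMap.coe_comp]; exact hf.comp hh
    obtain ⟨u, huS, q, hq⟩ := hB L (B ⧸ P) (f ∘ₗ h) P.mkQ hinj
      P.mkQ_surjective (by rw [Submodule.ker_mkQ])
    exact ⟨u, huS, q ∘ₗ f, fun a => hq a⟩
  · -- C is u-S-semisimple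
    -- first build a u-S-section σ of g
    obtain ⟨t, htS, p, hp⟩ := hB (LinearMap.ker g) C (LinearMap.ker g).subtype g
      (Submodule.injective_subtype _) hg (by simp)
    set φ : B →ₗ[R] B := t • LinearMap.id - (LinearMap.ker g).subtype ∘ₗ p with hφ
    have hφker : LinearMap.ker g ≤ LinearMap.ker φ := by
      intro x hx
      have hpx : p x = t • (⟨x, hx⟩ : LinearMap.ker g) := hp ⟨x, hx⟩
      simp only [hφ, LinearMap.mem_ker, LinearMap.sub_apply, LinearMap.smul_apply,
        LinearMap.id_apply, LinearMap.coe_comp, Function.comp_apply]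
      rw [hpx]
      simp
    set e : (B ⧸ LinearMap.ker g) ≃ₗ[R] C := g.quotKerEquivOfSurjective hg with he
    set σ : C →ₗ[R] B := ((LinearMap.ker g).liftQ φ hφker) ∘ₗ (e.symm : C →ₗ[R] B ⧸ LinearMap.ker g) with hσ
    have hσg : ∀ b : B, σ (g b) = φ b := by
      intro b
      have : e.symm (g b) = Submodule.Quotient.mk b := by
        apply e.injective
        simp [he, LinearMap.quotKerEquivOfSurjective]
      simp [hσ, this]
    have hgσ : ∀ c : C, g (σ c) = t • c := by
      intro c
      obtain ⟨b, rfl⟩ := hg c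
      rw [hσg b]
      simp only [hφ, LinearMap.sub_apply, LinearMap.smul_apply, LinearMap.id_apply, map_sub,
        map_smul, LinearMap.coe_comp, Function.comp_apply]
      have : g ((LinearMap.ker g).subtype (p b)) = 0 := (p b).2
      rw [this, sub_zero]
    intro L N _ _ _ _ h k hh hk hhk
    set K := LinearMap.ker (k ∘ₗ g) with hK
    obtain ⟨u, huS, q, hq⟩ := hB K N K.subtype (k ∘ₗ g)
      (Submodule.injective_subtype _)
      (by rw [LinearMap.coe_comp]; exact hk.comp hg) (by simp; exact hK)
    set ψ : C →ₗ[R] B := (K.subtype ∘ₗ q) ∘ₗ σ with hψ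
    have hrange : ∀ c : C, g (ψ c) ∈ LinearMap.range h := by
      intro c
      have h2 : (q (σ c) : B) ∈ K := (q (σ c)).2
      rw [hhk, LinearMap.mem_ker]
      show k (g ((q (σ c) : B))) = 0
      exact LinearMap.mem_ker.mp h2
    set eh : L ≃ₗ[R] LinearMap.range h := LinearEquiv.ofInjective h hh with heh
    refine ⟨u * t, mul_mem huS htS,
      (eh.symm : LinearMap.range h →ₗ[R] L) ∘ₗ ((g ∘ₗ ψ).codRestrict _ hrange), fun a => ?_⟩
    have hmemK : σ (h a) ∈ K := by
      simp only [hK, LinearMap.mem_ker, LinearMap.coe_comp, Function.comp_apply]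
      rw [hgσ, map_smul]
      have : k (h a) = 0 := by
        have : h a ∈ LinearMap.ker k := hhk ▸ LinearMap.mem_range_self h a
        simpa using this
      rw [this, smul_zero]
    have hval : g (ψ (h a)) = h ((u * t) • a) := by
      have h1 : (q (σ (h a)) : B) = u • σ (h a) := by
        have h0 := hq ⟨σ (h a), hmemK⟩
        have h0' := congrArg (Submodule.subtype K) h0
        simpa using h0'
      simp only [hψ, LinearMap.coe_comp, Function.comp_apply, Submodule.coe_subtype]
      rw [h1, map_smul, hgσ, smul_smul, ← map_smul]
    have hc : ((g ∘ₗ ψ).codRestrict _ hrange) (h a) = eh ((u * t) • a) := by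
      apply Subtype.ext
      simpa [heh] using hval
    simp only [LinearMap.coe_comp, Function.comp_apply, hc, LinearEquiv.coe_coe,
      LinearEquiv.symm_apply_apply]
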